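/- Fix integers 0 ≤ j < i ≤ n and set T_{i,j} := {(x_0, x) ∈ ℝ × ℝⁿ : h_{i,j}(x) = 0}. Then ⁿΓ_i ∩ T_{i,j} = ⁿΓ_j ∩ T_{i,j} (i.e. for every x with h_{i,j}(x) = 0 one has h_i(x)² = h_j(x)²), and moreover ∇(h_i²)(x) = ∇(h_j²)(x) at every such x. Thus the primary tangency locus of the graphs ⁿΓ_i and ⁿΓ_j coincides with the intersection of either graph with T_{i,j}. -/

import Mathlib

open scoped ContDiff

noncomputable section

/-- The polynomial `h_i` in the variables `x_1, …, x_i` (0-indexed: it depends on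
coordinates `0, …, i-1`): `h_0 = 0`, `h_{i+1}(x) = x 0 - (h_i (x ∘ (·+1)))^2`. -/
def hpoly : ℕ → (ℕ → ℝ) → ℝ
  | 0, _ => 0
  | i + 1, x => x 0 - (hpoly i fun k => x (k + 1)) ^ 2

/-- Extension of a vector of `ℝⁿ` by zeros to an infinite sequence. -/
def extv {n : ℕ} (x : Fin n → ℝ) : ℕ → ℝ := fun k => if h : k < n then x ⟨k, h⟩ else 0

/-- `h_{i,j}` as a function on `ℝⁿ` (0-indexed: it depends on coordinates `j, …, i-1`;
in the paper's notation `h_{i,j}(x) = h_{i-j}(x_{j+1}, …, x_i)`). -/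
def hh (n i j : ℕ) (x : Fin n → ℝ) : ℝ := hpoly (i - j) fun k => extv x (j + k)

lemma hh_of_le (n i j : ℕ) (h : i ≤ j) : hh n i j = fun _ => 0 := by
  funext x
  simp [hh, Nat.sub_eq_zero_of_le h, hpoly]

lemma hh_rec (n i j : ℕ) (hj : j < i) (hin : i ≤ n) (x : Fin n → ℝ) :
    hh n i j x = x ⟨j, lt_of_lt_of_le hj hin⟩ - (hh n i (j+1) x) ^ 2 := by
  unfold hh
  have h1 : i - j = (i - (j+1)) + 1 := by omega
  rw [h1]
  show hpoly _ _ = _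
  rw [hpoly]
  congr 1
  · show extv x (j + 0) = _
    simp [extv, Nat.lt_of_lt_of_le hj hin]
  · have h2 : (fun k => extv x (j + (k + 1))) = fun k => extv x (j + 1 + k) := by
      funext k; congr 1; omega
    rw [h2]

lemma hh_diff (n i : ℕ) (hin : i ≤ n) :
    ∀ d j, i ≤ j + d → Differentiable ℝ (hh n i j) := by
  intro d
  induction d with
  | zero =>
    intro j hj
    rw [hh_of_le n i j (by omega)]
    exact differentiable_const 0
  | succ d ih =>
    intro j hj
    by_cases h : j < i
    · have e : hh n i j = fun x => x ⟨j, lt_of_lt_of_le h hin⟩ - (hh n i (j+1) x) ^ 2 :=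
        funext (hh_rec n i j h hin)
      rw [e]
      exact ((ContinuousLinearMap.proj (R := ℝ) (φ := fun _ : Fin n => ℝ)
        ⟨j, lt_of_lt_of_le h hin⟩).differentiable).sub ((ih (j+1) (by omega)).pow 2)
    · rw [hh_of_le n i j (by omega)]
      exact differentiable_const 0

lemma hh_fderiv (n i j : ℕ) (hj : j < i) (hin : i ≤ n) (x : Fin n → ℝ) :
    fderiv ℝ (hh n i j) x = ContinuousLinearMap.proj ⟨j, lt_of_lt_of_le hj hin⟩
      - (2 * hh n i (j+1) x) • fderiv ℝ (hh n i (j+1)) x := by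
  have e : hh n i j = fun x => x ⟨j, lt_of_lt_of_le hj hin⟩ - (hh n i (j+1) x) ^ 2 :=
    funext (hh_rec n i j hj hin)
  have hd : DifferentiableAt ℝ (hh n i (j+1)) x := hh_diff n i hin i (j+1) (by omega) x
  have e2 : (fun y : Fin n → ℝ => (hh n i (j+1) y) ^ 2)
      = fun y => hh n i (j+1) y * hh n i (j+1) y := by
    funext y; ring
  have hf : DifferentiableAt ℝ (fun y : Fin n → ℝ => y ⟨j, lt_of_lt_of_le hj hin⟩) x :=
    (ContinuousLinearMap.proj (R := ℝ) (φ := fun _ : Fin n => ℝ)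
      ⟨j, lt_of_lt_of_le hj hin⟩).differentiableAt
  have hpf : fderiv ℝ (fun y : Fin n → ℝ => y ⟨j, lt_of_lt_of_le hj hin⟩) x
      = ContinuousLinearMap.proj ⟨j, lt_of_lt_of_le hj hin⟩ :=
    (ContinuousLinearMap.proj (R := ℝ) (φ := fun _ : Fin n => ℝ)
      ⟨j, lt_of_lt_of_le hj hin⟩).fderiv
  rw [e, fderiv_fun_sub (g := fun y => hh n i (j+1) y ^ 2) hf (hd.pow 2), e2, fderiv_fun_mul hd hd, hpf]
  congr 1
  rw [two_mul, add_smul]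

lemma fderiv_sq {n : ℕ} {g : (Fin n → ℝ) → ℝ} {x : Fin n → ℝ} (hd : DifferentiableAt ℝ g x) :
    fderiv ℝ (fun y => g y ^ 2) x = (2 * g x) • fderiv ℝ g x := by
  have e2 : (fun y => g y ^ 2) = fun y => g y * g y := by funext y; ring
  rw [e2, fderiv_fun_mul hd hd, two_mul, add_smul]

lemma key (n i j : ℕ) (hji : j < i) (hin : i ≤ n) (x : Fin n → ℝ) (hx : hh n i j x = 0) :
    ∀ d k, k + d = j → hh n i k x = hh n j k x ∧
      hh n i k x • fderiv ℝ (hh n i k) x = hh n j k x • fderiv ℝ (hh n j k) x := by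
  have hjn : j ≤ n := by omega
  intro d
  induction d with
  | zero =>
    intro k hk
    have hk' : k = j := by omega
    have e1 : hh n i k x = 0 := by rw [hk']; exact hx
    have e2 : hh n j k x = 0 := by
      rw [hk']; exact congrFun (hh_of_le n j j le_rfl) x
    refine ⟨by rw [e1, e2], ?_⟩
    rw [e1, e2]
    simp
  | succ d ih =>
    intro k hk
    have hkj : k < j := by omega
    have hki : k < i := by omega
    obtain ⟨hv, hs⟩ := ih (k+1) (by omega)
    have h1 := hh_rec n i k hki hin x
    have h2 := hh_rec n j k hkj hjn x
    have hveq : hh n i k x = hh n j k x := by rw [h1, h2, hv]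
    refine ⟨hveq, ?_⟩
    rw [hh_fderiv n i k hki hin x, hh_fderiv n j k hkj hjn x, smul_sub, smul_sub, hveq]
    congr 1
    rw [smul_smul, smul_smul]
    have : hh n j k x * (2 * hh n i (k+1) x) = (2 * hh n j k x) * hh n i (k+1) x := by ring
    rw [this, mul_smul, ← smul_smul, hs]
    have : hh n j k x * (2 * hh n j (k+1) x) = (2 * hh n j k x) * hh n j (k+1) x := by ring
    rw [this, mul_smul, ← smul_smul]

/-- The gradient of a function on `ℝⁿ`, via the Fréchet derivative. -/
def grad {n : ℕ} (f : (Fin n → ℝ) → ℝ) (x : Fin n → ℝ) : Fin n → ℝ :=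
  fun k => fderiv ℝ f x (Pi.single k 1)

/-- The `m`-th standard basis vector of `ℝⁿ` (zero if `m ≥ n`). -/
def evec (n m : ℕ) : Fin n → ℝ := fun k => if (k : ℕ) = m then 1 else 0

/-- Fix `0 ≤ j < i ≤ n` and `T_{i,j} = {(x_0, x) : h_{i,j}(x) = 0}`.  Then
`ⁿΓ_i ∩ T_{i,j} = ⁿΓ_j ∩ T_{i,j}` (i.e. `h_{i,j}(x) = 0` implies `h_i(x)² = h_j(x)²`), and
moreover `∇(h_i²)(x) = ∇(h_j²)(x)` at every such `x`; thus the primary tangency locus of the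
graphs `ⁿΓ_i` and `ⁿΓ_j` coincides with the intersection of either graph with `T_{i,j}`. -/
theorem stmt_10 (n i j : ℕ) (hji : j < i) (hin : i ≤ n) :
    ({z : ℝ × (Fin n → ℝ) | z.1 = (hh n i 0 z.2) ^ 2 ∧ hh n i j z.2 = 0}
      = {z : ℝ × (Fin n → ℝ) | z.1 = (hh n j 0 z.2) ^ 2 ∧ hh n i j z.2 = 0}) ∧
    (∀ x : Fin n → ℝ, hh n i j x = 0 →
      (hh n i 0 x) ^ 2 = (hh n j 0 x) ^ 2 ∧
      grad (fun y => (hh n i 0 y) ^ 2) x = grad (fun y => (hh n j 0 y) ^ 2) x) := by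
  have hjn : j ≤ n := by omega
  have hvfd : ∀ x : Fin n → ℝ, hh n i j x = 0 →
      hh n i 0 x = hh n j 0 x ∧
      fderiv ℝ (fun y => (hh n i 0 y) ^ 2) x = fderiv ℝ (fun y => (hh n j 0 y) ^ 2) x := by
    intro x hx
    obtain ⟨hv, hs⟩ := key n i j hji hin x hx j 0 (by omega)
    refine ⟨hv, ?_⟩
    rw [fderiv_sq (hh_diff n i hin i 0 (by omega) x),
      fderiv_sq (hh_diff n j hjn j 0 (by omega) x), mul_smul, mul_smul, hs]
  constructor
  · ext z
    simp only [Set.mem_setOf_eq]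
    constructor
    · rintro ⟨h1, h2⟩
      exact ⟨by rw [h1, (hvfd z.2 h2).1], h2⟩
    · rintro ⟨h1, h2⟩
      exact ⟨by rw [h1, (hvfd z.2 h2).1], h2⟩
  · intro x hx
    obtain ⟨hv, hfd⟩ := hvfd x hx
    refine ⟨by rw [hv], ?_⟩
    funext k
    unfold grad
    rw [hfd]
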